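/- Fix an integer k ≥ 2 and define the fringe sets B₁ = ([0, 2k+1] × [0, 2k+1]) \ ({(2,0), (0,2)} ∪ {(x,0), (0,y) : k+2 ≤ x, y ≤ 2k}) and B₂ = ([0, 2k+2] × [0, 2k+2]) \ ({(3,0), (0,3)} ∪ {(x,0), (0,y) : k+3 ≤ x, y ≤ 2k+1}) in ℤ². Then for all integers a, b ≥ 0 with a + b ≥ 1, aB₁ + bB₂ = ([0, 2k(a+b)+(a+2b)] × [0, 2k(a+b)+(a+2b)]) \ ({(2k(a+b−1)+(a+2b+1), 0), (0, 2k(a+b−1)+(a+2b+1))} ∪ {(x,0), (0,y) : k(2a+2b−1)+(a+2b+1) ≤ x, y ≤ 2k(a+b)+(a+2b−1)}). -/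

import Mathlib

open Pointwise

/-- The `n`-fold iterated sumset: `iterSum 0 A = {0}`, `iterSum (n+1) A = A + iterSum n A`. -/
def iterSum {G : Type*} [AddCommGroup G] [DecidableEq G] : ℕ → Finset G → Finset G
  | 0, _ => {0}
  | n + 1, A => A + iterSum n A

noncomputable def fr (N h lo hi : ℤ) : Finset (ℤ × ℤ) :=
  (Finset.Icc 0 N ×ˢ Finset.Icc 0 N) \
    (({(h,0), (0,h)} : Finset (ℤ × ℤ)) ∪
      (Finset.Icc lo hi).image (fun x => (x, (0:ℤ))) ∪
      (Finset.Icc lo hi).image (fun y => ((0:ℤ), y)))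

lemma fr_congr {N h lo hi N' h' lo' hi' : ℤ} (e1 : N = N') (e2 : h = h')
    (e3 : lo = lo') (e4 : hi = hi') : fr N h lo hi = fr N' h' lo' hi' := by
  subst e1; subst e2; subst e3; subst e4; rfl

lemma mem_fr {N h lo hi x y : ℤ} :
    (x, y) ∈ fr N h lo hi ↔
      (0 ≤ x ∧ x ≤ N ∧ 0 ≤ y ∧ y ≤ N) ∧
      ¬((x = h ∧ y = 0) ∨ (x = 0 ∧ y = h) ∨ (y = 0 ∧ lo ≤ x ∧ x ≤ hi) ∨
        (x = 0 ∧ lo ≤ y ∧ y ≤ hi)) := by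
  simp only [fr, Finset.mem_sdiff, Finset.mem_product, Finset.mem_Icc, Finset.mem_union,
    Finset.mem_insert, Finset.mem_singleton, Finset.mem_image, Prod.mk.injEq]
  constructor
  · rintro ⟨⟨⟨h1,h2⟩,h3,h4⟩, h5⟩
    refine ⟨⟨h1,h2,h3,h4⟩, ?_⟩
    intro hc
    apply h5
    rcases hc with ⟨e1,e2⟩ | ⟨e1,e2⟩ | ⟨e1,e2,e3⟩ | ⟨e1,e2,e3⟩
    · exact Or.inl (Or.inl (Or.inl ⟨e1, e2⟩))
    · exact Or.inl (Or.inl (Or.inr ⟨e1, e2⟩))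
    · exact Or.inl (Or.inr ⟨x, ⟨e2, e3⟩, rfl, e1.symm⟩)
    · exact Or.inr ⟨y, ⟨e2, e3⟩, e1.symm, rfl⟩
  · rintro ⟨⟨h1,h2,h3,h4⟩, h5⟩
    refine ⟨⟨⟨h1,h2⟩,h3,h4⟩, ?_⟩
    intro hc
    apply h5
    rcases hc with ((⟨e1,e2⟩ | ⟨e1,e2⟩) | ⟨a, ha, ea, e0⟩) | ⟨a, ha, e0, ea⟩
    · exact Or.inl ⟨e1, e2⟩
    · exact Or.inr (Or.inl ⟨e1, e2⟩)
    · exact Or.inr (Or.inr (Or.inl ⟨e0.symm, by omega⟩))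
    · exact Or.inr (Or.inr (Or.inr ⟨e0.symm, by omega⟩))

/-- Canonical frame of size `N` for parameter `k`. -/
noncomputable def F (k N : ℤ) : Finset (ℤ × ℤ) := fr N (N - 2*k + 1) (N - k + 1) (N - 1)

lemma mem_F {k N x y : ℤ} (hk : 2 ≤ k) (hN : 2*k+1 ≤ N) :
    (x, y) ∈ F k N ↔
      (0 ≤ x ∧ x ≤ N ∧ 0 ≤ y ∧ y ≤ N ∧
       (y = 0 → x ≠ N - 2*k + 1 ∧ (x ≤ N - k ∨ x = N)) ∧
       (x = 0 → y ≠ N - 2*k + 1 ∧ (y ≤ N - k ∨ y = N))) := by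
  rw [F, mem_fr]; omega

/-- y = 1 helper: split x as p + r with r an allowed axis value for N. -/
lemma helper1 (k M N x : ℤ) (hk : 2 ≤ k) (hM : 2*k+1 ≤ M) (hN : 2*k+1 ≤ N)
    (hx : 0 ≤ x) (hx2 : x ≤ M + N) :
    ∃ p r, 0 ≤ p ∧ p ≤ M ∧ 0 ≤ r ∧ r ≤ N ∧ r ≠ N - 2*k + 1 ∧ (r ≤ N - k ∨ r = N) ∧
      p + r = x := by
  rcases le_or_gt x M with h | h
  · exact ⟨x, 0, by omega⟩
  rcases le_or_gt (x - M) (N - 2*k) with h2 | h2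
  · exact ⟨M, x - M, by omega⟩
  rcases eq_or_ne (x - M) (N - 2*k + 1) with h3 | h3
  · exact ⟨M - 1, x - M + 1, by omega⟩
  rcases le_or_gt (x - M) (N - k) with h4 | h4
  · exact ⟨M, x - M, by omega⟩
  · exact ⟨x - N, N, by omega⟩

/-- y = 0 helper: split an allowed axis value of M+N into allowed axis values. -/
lemma helper0 (k M N x : ℤ) (hk : 2 ≤ k) (hM : 2*k+1 ≤ M) (hN : 2*k+1 ≤ N)
    (hx0 : 0 ≤ x) (hx1 : x ≤ M + N) (hx2 : x ≠ M + N - 2*k + 1)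
    (hx3 : x ≤ M + N - k ∨ x = M + N) :
    ∃ p r, (0 ≤ p ∧ p ≤ M ∧ p ≠ M - 2*k + 1 ∧ (p ≤ M - k ∨ p = M)) ∧
      (0 ≤ r ∧ r ≤ N ∧ r ≠ N - 2*k + 1 ∧ (r ≤ N - k ∨ r = N)) ∧ p + r = x := by
  rcases le_or_gt x (M - 2*k) with h | h
  · exact ⟨x, 0, by omega⟩
  rcases eq_or_ne x (M - 2*k + 1) with h2 | h2
  · exact ⟨M - 2*k, 1, by omega⟩
  rcases le_or_gt x (M - k) with h3 | h3
  · exact ⟨x, 0, by omega⟩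
  rcases le_or_gt x (M - 1) with h4 | h4
  · -- x = M - j, j ∈ [1, k-1]
    rcases eq_or_ne (N + M - x) (3*k - 1) with h5 | h5
    · exact ⟨M - k - 1, x - M + k + 1, by omega⟩
    · exact ⟨M - k, x - M + k, by omega⟩
  rcases le_or_gt x (M + N - 2*k) with h6 | h6
  · exact ⟨M, x - M, by omega⟩
  rcases le_or_gt x (M + N - k) with h7 | h7
  · exact ⟨x - N, N, by omega⟩
  · exact ⟨M, N, by omega⟩

lemma back (k M N x y : ℤ) (hk : 2 ≤ k) (hM : 2*k+1 ≤ M) (hN : 2*k+1 ≤ N)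
    (h1 : 0 ≤ x) (h2 : x ≤ M + N) (h3 : 0 ≤ y) (h4 : y ≤ M + N)
    (h5 : y = 0 → x ≠ M + N - 2*k + 1 ∧ (x ≤ M + N - k ∨ x = M + N))
    (h6 : x = 0 → y ≠ M + N - 2*k + 1 ∧ (y ≤ M + N - k ∨ y = M + N)) :
    ∃ p q r s,
      (0 ≤ p ∧ p ≤ M ∧ 0 ≤ q ∧ q ≤ M ∧
        (q = 0 → p ≠ M - 2*k + 1 ∧ (p ≤ M - k ∨ p = M)) ∧
        (p = 0 → q ≠ M - 2*k + 1 ∧ (q ≤ M - k ∨ q = M))) ∧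
      (0 ≤ r ∧ r ≤ N ∧ 0 ≤ s ∧ s ≤ N ∧
        (s = 0 → r ≠ N - 2*k + 1 ∧ (r ≤ N - k ∨ r = N)) ∧
        (r = 0 → s ≠ N - 2*k + 1 ∧ (s ≤ N - k ∨ s = N))) ∧
      p + r = x ∧ q + s = y := by
  rcases eq_or_ne y 0 with rfl | hy0
  · obtain ⟨p, r, hp, hr, hpr⟩ := helper0 k M N x hk hM hN h1 h2 (h5 rfl).1 (h5 rfl).2
    exact ⟨p, 0, r, 0, by omega⟩
  rcases eq_or_ne y 1 with rfl | hy1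
  · obtain ⟨p, r, hp⟩ := helper1 k M N x hk hM hN h1 h2
    exact ⟨p, 1, r, 0, by omega⟩
  rcases eq_or_ne x 0 with rfl | hx0
  · obtain ⟨q, s, hq, hs, hqs⟩ := helper0 k M N y hk hM hN h3 h4 (h6 rfl).1 (h6 rfl).2
    exact ⟨0, q, 0, s, by omega⟩
  rcases eq_or_ne x 1 with rfl | hx1
  · obtain ⟨q, s, hq⟩ := helper1 k M N y hk hM hN h3 h4
    exact ⟨1, q, 0, s, by omega⟩
  · exact ⟨max 1 (x - N), max 1 (y - N), x - max 1 (x - N), y - max 1 (y - N), by omega⟩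

lemma key (k M N : ℤ) (hk : 2 ≤ k) (hM : 2*k+1 ≤ M) (hN : 2*k+1 ≤ N) :
    F k M + F k N = F k (M + N) := by
  ext ⟨x, y⟩
  rw [Finset.mem_add, mem_F hk (by omega)]
  constructor
  · rintro ⟨⟨p, q⟩, hp, ⟨r, s⟩, hr, heq⟩
    rw [mem_F hk hM] at hp
    rw [mem_F hk hN] at hr
    rw [Prod.mk_add_mk, Prod.mk.injEq] at heq
    omega
  · intro h
    obtain ⟨p, q, r, s, hp, hr, e1, e2⟩ :=
      back k M N x y hk hM hN h.1 h.2.1 h.2.2.1 h.2.2.2.1 h.2.2.2.2.1 h.2.2.2.2.2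
    exact ⟨(p, q), (mem_F hk hM).2 hp, (r, s), (mem_F hk hN).2 hr,
      by rw [Prod.mk_add_mk, e1, e2]⟩

lemma iter_F (k T : ℤ) (hk : 2 ≤ k) (hT : 2*k+1 ≤ T) :
    ∀ n : ℕ, iterSum (n+1) (F k T) = F k (T * (n+1)) := by
  intro n
  induction n with
  | zero =>
    show F k T + ({0} : Finset (ℤ × ℤ)) = _
    rw [show ({0} : Finset (ℤ × ℤ)) = (0 : Finset (ℤ × ℤ)) from rfl, add_zero]
    exact fr_congr (by ring) (by ring) (by ring) (by ring)
  | succ n ih =>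
    show F k T + iterSum (n+1) (F k T) = _
    rw [ih, key k T (T * (n+1)) hk hT (by nlinarith [Int.natCast_nonneg n])]
    exact fr_congr (by push_cast; ring) (by push_cast; ring) (by push_cast; ring)
      (by push_cast; ring)

theorem stmt2 (k : ℤ) (hk : 2 ≤ k)
    (B₁ B₂ : Finset (ℤ × ℤ))
    (hB₁ : B₁ = (Finset.Icc 0 (2*k+1) ×ˢ Finset.Icc 0 (2*k+1)) \
      (({(2,0), (0,2)} : Finset (ℤ × ℤ)) ∪
        (Finset.Icc (k+2) (2*k)).image (fun x => (x, (0:ℤ))) ∪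
        (Finset.Icc (k+2) (2*k)).image (fun y => ((0:ℤ), y))))
    (hB₂ : B₂ = (Finset.Icc 0 (2*k+2) ×ˢ Finset.Icc 0 (2*k+2)) \
      (({(3,0), (0,3)} : Finset (ℤ × ℤ)) ∪
        (Finset.Icc (k+3) (2*k+1)).image (fun x => (x, (0:ℤ))) ∪
        (Finset.Icc (k+3) (2*k+1)).image (fun y => ((0:ℤ), y))))
    (a b : ℕ) (hab : 1 ≤ a + b) :
    iterSum a B₁ + iterSum b B₂ =
      (Finset.Icc 0 (2*k*((a:ℤ)+b) + ((a:ℤ)+2*b)) ×ˢ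
        Finset.Icc 0 (2*k*((a:ℤ)+b) + ((a:ℤ)+2*b))) \
        (({(2*k*((a:ℤ)+b-1) + ((a:ℤ)+2*b+1), 0),
           (0, 2*k*((a:ℤ)+b-1) + ((a:ℤ)+2*b+1))} : Finset (ℤ × ℤ)) ∪
          (Finset.Icc (k*(2*(a:ℤ)+2*b-1) + ((a:ℤ)+2*b+1))
            (2*k*((a:ℤ)+b) + ((a:ℤ)+2*b-1))).image (fun x => (x, (0:ℤ))) ∪
          (Finset.Icc (k*(2*(a:ℤ)+2*b-1) + ((a:ℤ)+2*b+1))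
            (2*k*((a:ℤ)+b) + ((a:ℤ)+2*b-1))).image (fun y => ((0:ℤ), y))) := by
  have hF1 : B₁ = F k (2*k+1) := by
    rw [hB₁]
    show fr (2*k+1) 2 (k+2) (2*k) = _
    exact fr_congr (by ring) (by ring) (by ring) (by ring)
  have hF2 : B₂ = F k (2*k+2) := by
    rw [hB₂]
    show fr (2*k+2) 3 (k+3) (2*k+1) = _
    exact fr_congr (by ring) (by ring) (by ring) (by ring)
  have main : iterSum a B₁ + iterSum b B₂ = F k (2*k*((a:ℤ)+b) + ((a:ℤ)+2*b)) := by
    match a, b with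
    | 0, b + 1 =>
      show ({0} : Finset (ℤ × ℤ)) + iterSum (b+1) B₂ = _
      rw [show ({0} : Finset (ℤ × ℤ)) = (0 : Finset (ℤ × ℤ)) from rfl, zero_add, hF2,
        iter_F k (2*k+2) hk (by omega) b]
      exact fr_congr (by push_cast; ring) (by push_cast; ring) (by push_cast; ring)
        (by push_cast; ring)
    | a + 1, 0 =>
      show iterSum (a+1) B₁ + ({0} : Finset (ℤ × ℤ)) = _
      rw [show ({0} : Finset (ℤ × ℤ)) = (0 : Finset (ℤ × ℤ)) from rfl, add_zero, hF1,
        iter_F k (2*k+1) hk (by omega) a]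
      exact fr_congr (by push_cast; ring) (by push_cast; ring) (by push_cast; ring)
        (by push_cast; ring)
    | a + 1, b + 1 =>
      rw [hF1, hF2, iter_F k (2*k+1) hk (by omega) a, iter_F k (2*k+2) hk (by omega) b,
        key k _ _ hk (by nlinarith [Int.natCast_nonneg a]) (by nlinarith [Int.natCast_nonneg b])]
      exact fr_congr (by push_cast; ring) (by push_cast; ring) (by push_cast; ring)
        (by push_cast; ring)
  rw [main, F]
  exact fr_congr rfl (by ring) (by ring) (by ring)
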